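/- Let f : ℝ³ → ℝ be three times continuously differentiable and let x₀ ∈ ℝ³ satisfy f(x₀) = 0 and ∇f(x₀) ≠ 0. Then there exist δ > 0 and C > 0 such that for all z₁, z₂ in the open ball of radius δ around x₀ with f(z₁) = f(z₂) = 0, setting a := (z₁ + z₂)/2 and b := (z₁ − z₂)/2, one has ∇f(a) ≠ 0 and ‖(b × Dn̂(a)[b]) × n̂(a)‖ ≤ C ‖b‖⁴. -/

import Mathlib

/-- Cross product on `ℝ³` (as `EuclideanSpace ℝ (Fin 3)`). -/
noncomputable def cross3 (a b : EuclideanSpace ℝ (Fin 3)) : EuclideanSpace ℝ (Fin 3) :=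
  WithLp.toLp 2 (crossProduct a b)

/-- The unit normal field `n̂(x) = ∇f(x)/‖∇f(x)‖` of level surfaces of `f`. -/
noncomputable def nhat (f : EuclideanSpace ℝ (Fin 3) → ℝ)
    (x : EuclideanSpace ℝ (Fin 3)) : EuclideanSpace ℝ (Fin 3) :=
  ‖gradient f x‖⁻¹ • gradient f x

open Set

noncomputable instance normedAddCommGroupCLM2 {E : Type*} [NormedAddCommGroup E] [NormedSpace ℝ E] :
    NormedAddCommGroup (E →L[ℝ] E →L[ℝ] ℝ) := ContinuousLinearMap.toNormedAddCommGroup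

noncomputable instance normedSpaceCLM2 {E : Type*} [NormedAddCommGroup E] [NormedSpace ℝ E] :
    NormedSpace ℝ (E →L[ℝ] E →L[ℝ] ℝ) := ContinuousLinearMap.toNormedSpace

section Aux

theorem cross3_cross3 (u v n : EuclideanSpace ℝ (Fin 3)) :
    cross3 (cross3 u v) n = (inner ℝ u n : ℝ) • v - (inner ℝ v n : ℝ) • u := by
  unfold cross3
  ext i
  simp only [crossProduct, PiLp.inner_apply, RCLike.inner_apply, starRingEnd_apply, star_trivial,
    Fin.sum_univ_three, PiLp.sub_apply, PiLp.smul_apply, smul_eq_mul, LinearMap.mk₂_apply]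
  fin_cases i <;> simp <;> ring

theorem myIteratedDerivWithin_eq {f : ℝ → ℝ} {n : ℕ∞} (hf : ContDiff ℝ n f) {m : ℕ}
    (hm : (m : ℕ∞) ≤ n) {s : Set ℝ} (hs : UniqueDiffOn ℝ s) {x : ℝ} (hx : x ∈ s) :
    iteratedDerivWithin m f s x = iteratedDeriv m f x := by
  rw [iteratedDerivWithin_eq_iteratedFDerivWithin, iteratedDeriv_eq_iteratedFDeriv]
  congr 1
  have h : HasFTaylorSeriesUpTo n f (ftaylorSeries ℝ f) := contDiff_iff_ftaylorSeries.1 hf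
  have h1 := (h.hasFTaylorSeriesUpToOn s).eq_iteratedFDerivWithin_of_uniqueDiffOn
    (by exact_mod_cast hm) hs hx
  have h2 := h.eq_iteratedFDeriv (by exact_mod_cast hm) x
  rw [← h1, h2]

variable {E : Type*} [NormedAddCommGroup E] [NormedSpace ℝ E]

theorem line_hasDerivAt (a b : E) (t : ℝ) : HasDerivAt (fun t : ℝ => a + t • b) b t := by
  simpa using ((hasDerivAt_id t).smul_const b).const_add a

theorem line_contDiff (a b : E) : ContDiff ℝ 3 (fun t : ℝ => a + t • b) :=
  contDiff_const.add (contDiff_id.smul contDiff_const)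

theorem hasDerivAt_comp_line₁ {f : E → ℝ} (hf : ContDiff ℝ 3 f) (a b : E) (t : ℝ) :
    HasDerivAt (fun t : ℝ => f (a + t • b)) (fderiv ℝ f (a + t • b) b) t :=
  ((hf.differentiable (by norm_num)).differentiableAt.hasFDerivAt).comp_hasDerivAt t
    (line_hasDerivAt a b t)

theorem hasDerivAt_comp_line₂ {f : E → ℝ} (hf : ContDiff ℝ 3 f) (a b : E) (t : ℝ) :
    HasDerivAt (fun t : ℝ => fderiv ℝ f (a + t • b) b)
      (fderiv ℝ (fderiv ℝ f) (a + t • b) b b) t := by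
  have hF1 : ContDiff ℝ 2 (fderiv ℝ f) := hf.fderiv_right (by norm_num)
  have h := ((hF1.differentiable (by norm_num)).differentiableAt.hasFDerivAt).comp_hasDerivAt t
    (line_hasDerivAt a b t)
  simpa using h.clm_apply (hasDerivAt_const t b)

theorem hasDerivAt_comp_line₃ {f : E → ℝ} (hf : ContDiff ℝ 3 f) (a b : E) (t : ℝ) :
    HasDerivAt (fun t : ℝ => fderiv ℝ (fderiv ℝ f) (a + t • b) b b)
      (fderiv ℝ (fderiv ℝ (fderiv ℝ f)) (a + t • b) b b b) t := by
  have hF2 : ContDiff ℝ 1 (fderiv ℝ (fderiv ℝ f)) :=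
    (hf.fderiv_right (m := 2) (by norm_num)).fderiv_right (by norm_num)
  have h := ((hF2.differentiable (by norm_num)).differentiableAt.hasFDerivAt).comp_hasDerivAt t
    (line_hasDerivAt a b t)
  simpa using (h.clm_apply (hasDerivAt_const t b)).clm_apply (hasDerivAt_const t b)

theorem taylor_core {f : E → ℝ} (hf : ContDiff ℝ 3 f) (a b : E) {M : ℝ}
    (hM : ∀ t ∈ Icc (0:ℝ) 1, ‖fderiv ℝ (fderiv ℝ (fderiv ℝ f)) (a + t • b)‖ ≤ M ∧
      ‖fderiv ℝ (fderiv ℝ (fderiv ℝ f)) (a + t • (-b))‖ ≤ M)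
    (h1 : f (a + b) = 0) (h2 : f (a - b) = 0) :
    |fderiv ℝ f a b| ≤ M / 6 * ‖b‖ ^ 3 := by
  set ψ : ℝ → ℝ := fun t => f (a + t • b) - f (a + t • (-b)) with hψdef
  have hψ : ContDiff ℝ 3 ψ := (hf.comp (line_contDiff a b)).sub (hf.comp (line_contDiff a (-b)))
  set D1 : ℝ → ℝ := fun t => fderiv ℝ f (a + t • b) b - fderiv ℝ f (a + t • (-b)) (-b) with hD1
  set D2 : ℝ → ℝ := fun t => fderiv ℝ (fderiv ℝ f) (a + t • b) b b
    - fderiv ℝ (fderiv ℝ f) (a + t • (-b)) (-b) (-b) with hD2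
  set D3 : ℝ → ℝ := fun t => fderiv ℝ (fderiv ℝ (fderiv ℝ f)) (a + t • b) b b b
    - fderiv ℝ (fderiv ℝ (fderiv ℝ f)) (a + t • (-b)) (-b) (-b) (-b) with hD3
  have hd1 : ∀ t, HasDerivAt ψ (D1 t) t := fun t =>
    (hasDerivAt_comp_line₁ hf a b t).sub (hasDerivAt_comp_line₁ hf a (-b) t)
  have hd2 : ∀ t, HasDerivAt D1 (D2 t) t := fun t =>
    (hasDerivAt_comp_line₂ hf a b t).sub (hasDerivAt_comp_line₂ hf a (-b) t)
  have hd3 : ∀ t, HasDerivAt D2 (D3 t) t := fun t =>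
    (hasDerivAt_comp_line₃ hf a b t).sub (hasDerivAt_comp_line₃ hf a (-b) t)
  have e1 : deriv ψ = D1 := funext fun t => (hd1 t).deriv
  have e2 : iteratedDeriv 2 ψ = D2 := by
    funext t
    rw [iteratedDeriv_succ, iteratedDeriv_one, e1]
    exact (hd2 t).deriv
  have e3 : iteratedDeriv 3 ψ = D3 := by
    funext t
    rw [show (3:ℕ) = 2 + 1 from rfl, iteratedDeriv_succ, e2]
    exact (hd3 t).deriv
  have hwithin : ∀ m : ℕ, m ≤ 3 → ∀ x ∈ Icc (0:ℝ) 1,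
      iteratedDerivWithin m ψ (Icc 0 1) x = iteratedDeriv m ψ x := fun m hm x hx =>
    myIteratedDerivWithin_eq hψ (by exact_mod_cast hm) (uniqueDiffOn_Icc one_pos) hx
  have hdiffOn : DifferentiableOn ℝ (iteratedDerivWithin 2 ψ (Icc 0 1)) (Ioo 0 1) := by
    have : DifferentiableOn ℝ (iteratedDeriv 2 ψ) (Ioo 0 1) := fun x _ =>
      (e2 ▸ (hd3 x).differentiableAt).differentiableWithinAt
    exact this.congr fun x hx => hwithin 2 (by norm_num) x (Ioo_subset_Icc_self hx)
  obtain ⟨x', hx', hTaylor⟩ := taylor_mean_remainder_lagrange (f := ψ) (n := 2) (x₀ := 0) (x := 1)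
    zero_ne_one (by rw [Set.uIcc_of_le zero_le_one]; exact (hψ.of_le (by norm_num)).contDiffOn)
    (by rw [Set.uIcc_of_le zero_le_one, Set.uIoo_of_le zero_le_one]; exact hdiffOn)
  rw [Set.uIoo_of_le zero_le_one] at hx'
  rw [Set.uIcc_of_le zero_le_one] at hTaylor
  have hψ1 : ψ 1 = 0 := by
    simp only [hψdef, one_smul]
    rw [show a + -b = a - b from (sub_eq_add_neg a b).symm, h1, h2, sub_zero]
  have hψ0 : ψ 0 = 0 := by simp [hψdef]
  have hv0 : iteratedDeriv 0 ψ 0 = 0 := by simpa using hψ0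
  have hv1 : iteratedDeriv 1 ψ 0 = 2 * fderiv ℝ f a b := by
    rw [iteratedDeriv_one, e1]
    simp [hD1]
    ring
  have hv2 : iteratedDeriv 2 ψ 0 = 0 := by
    rw [e2]
    simp [hD2]
  have hpoly : taylorWithinEval ψ 2 (Icc 0 1) 0 1 = 2 * fderiv ℝ f a b := by
    rw [taylor_within_apply]
    rw [Finset.sum_range_succ, Finset.sum_range_succ, Finset.sum_range_one]
    rw [hwithin 0 (by norm_num) 0 (by norm_num), hwithin 1 (by norm_num) 0 (by norm_num),
      hwithin 2 (by norm_num) 0 (by norm_num), hv0, hv1, hv2]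
    norm_num
  rw [hψ1, hpoly, hwithin 3 (by norm_num) x' (Ioo_subset_Icc_self hx'), e3] at hTaylor
  have hx'' : x' ∈ Icc (0:ℝ) 1 := Ioo_subset_Icc_self hx'
  have hb3 : ∀ y : E, ∀ v : E, |fderiv ℝ (fderiv ℝ (fderiv ℝ f)) y v v v| ≤
      ‖fderiv ℝ (fderiv ℝ (fderiv ℝ f)) y‖ * ‖v‖ ^ 3 := by
    intro y v
    calc |fderiv ℝ (fderiv ℝ (fderiv ℝ f)) y v v v|
        ≤ ‖fderiv ℝ (fderiv ℝ (fderiv ℝ f)) y v v‖ * ‖v‖ :=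
          (fderiv ℝ (fderiv ℝ (fderiv ℝ f)) y v v).le_opNorm v
      _ ≤ ‖fderiv ℝ (fderiv ℝ (fderiv ℝ f)) y v‖ * ‖v‖ * ‖v‖ := by
          gcongr; exact (fderiv ℝ (fderiv ℝ (fderiv ℝ f)) y v).le_opNorm v
      _ ≤ ‖fderiv ℝ (fderiv ℝ (fderiv ℝ f)) y‖ * ‖v‖ * ‖v‖ * ‖v‖ := by
          gcongr; exact (fderiv ℝ (fderiv ℝ (fderiv ℝ f)) y).le_opNorm v
      _ = ‖fderiv ℝ (fderiv ℝ (fderiv ℝ f)) y‖ * ‖v‖ ^ 3 := by ring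
  have hbound : |D3 x'| ≤ 2 * (M * ‖b‖ ^ 3) := by
    have hA := (hb3 (a + x' • b) b).trans
      (mul_le_mul_of_nonneg_right (hM x' hx'').1 (by positivity))
    have hB : |fderiv ℝ (fderiv ℝ (fderiv ℝ f)) (a + x' • (-b)) (-b) (-b) (-b)| ≤ M * ‖b‖ ^ 3 := by
      refine (hb3 (a + x' • (-b)) (-b)).trans ?_
      rw [norm_neg]
      exact mul_le_mul_of_nonneg_right (hM x' hx'').2 (by positivity)
    calc |D3 x'| ≤ |fderiv ℝ (fderiv ℝ (fderiv ℝ f)) (a + x' • b) b b b| +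
        |fderiv ℝ (fderiv ℝ (fderiv ℝ f)) (a + x' • (-b)) (-b) (-b) (-b)| := abs_sub _ _
      _ ≤ M * ‖b‖ ^ 3 + M * ‖b‖ ^ 3 := add_le_add hA hB
      _ = 2 * (M * ‖b‖ ^ 3) := by ring
  have hfab : fderiv ℝ f a b = -(D3 x') / 12 := by
    have h6 : (((2:ℕ) + 1).factorial : ℝ) = 6 := by norm_num [Nat.factorial]
    rw [h6] at hTaylor
    norm_num at hTaylor
    linarith
  rw [hfab, abs_div, abs_neg, show |(12:ℝ)| = 12 by norm_num]
  calc |D3 x'| / 12 ≤ 2 * (M * ‖b‖ ^ 3) / 12 := by gcongr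
    _ = M / 6 * ‖b‖ ^ 3 := by ring

theorem gradient_contDiff {f : EuclideanSpace ℝ (Fin 3) → ℝ} (hf : ContDiff ℝ 3 f) :
    ContDiff ℝ 2 (gradient f) := by
  have : gradient f = (InnerProductSpace.toDual ℝ _).symm ∘ fderiv ℝ f := rfl
  rw [this]
  exact ((InnerProductSpace.toDual ℝ _).symm.contDiff).comp (hf.fderiv_right (by norm_num))

theorem inner_gradient_eq {f : EuclideanSpace ℝ (Fin 3) → ℝ} (x b : EuclideanSpace ℝ (Fin 3)) :
    (inner ℝ (gradient f x) b : ℝ) = fderiv ℝ f x b := by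
  rw [gradient, InnerProductSpace.toDual_symm_apply]

theorem nhat_contDiffAt {f : EuclideanSpace ℝ (Fin 3) → ℝ} (hf : ContDiff ℝ 3 f)
    {a : EuclideanSpace ℝ (Fin 3)} (ha : gradient f a ≠ 0) :
    ContDiffAt ℝ 1 (nhat f) a := by
  have hg := gradient_contDiff hf
  have hn : ContDiffAt ℝ 2 (fun x => ‖gradient f x‖) a := hg.contDiffAt.norm ℝ ha
  exact (((hn.inv (norm_ne_zero_iff.2 ha)).smul hg.contDiffAt).of_le (by norm_num))

theorem nhat_norm_one {f : EuclideanSpace ℝ (Fin 3) → ℝ} {x : EuclideanSpace ℝ (Fin 3)}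
    (hx : gradient f x ≠ 0) : ‖nhat f x‖ = 1 := by
  rw [nhat, norm_smul, norm_inv, norm_norm]
  field_simp [norm_ne_zero_iff.2 hx]

theorem nhat_orth {f : EuclideanSpace ℝ (Fin 3) → ℝ} (hf : ContDiff ℝ 3 f)
    {a : EuclideanSpace ℝ (Fin 3)} (ha : gradient f a ≠ 0) (b : EuclideanSpace ℝ (Fin 3)) :
    (inner ℝ (fderiv ℝ (nhat f) a b) (nhat f a) : ℝ) = 0 := by
  have hg := gradient_contDiff hf
  have hV : IsOpen {x : EuclideanSpace ℝ (Fin 3) | gradient f x ≠ 0} := by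
    have : {x : EuclideanSpace ℝ (Fin 3) | gradient f x ≠ 0} = (gradient f) ⁻¹' {0}ᶜ := rfl
    rw [this]
    exact (isClosed_singleton.preimage hg.continuous).isOpen_compl
  have hmem : {x : EuclideanSpace ℝ (Fin 3) | gradient f x ≠ 0} ∈ nhds a := hV.mem_nhds ha
  have hd : DifferentiableAt ℝ (nhat f) a :=
    (nhat_contDiffAt hf ha).differentiableAt (by norm_num)
  have hconst : fderiv ℝ (fun x => (inner ℝ (nhat f x) (nhat f x) : ℝ)) a = 0 := by
    have hev : (fun x => (inner ℝ (nhat f x) (nhat f x) : ℝ)) =ᶠ[nhds a] (fun _ => (1:ℝ)) := by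
      filter_upwards [hmem] with x hx
      rw [real_inner_self_eq_norm_sq, nhat_norm_one hx]
      norm_num
    rw [hev.fderiv_eq, fderiv_fun_const]
    rfl
  have happ := fderiv_inner_apply (𝕜 := ℝ) hd hd b
  rw [hconst] at happ
  have : (0:ℝ) = inner ℝ (nhat f a) (fderiv ℝ (nhat f) a b)
      + inner ℝ (fderiv ℝ (nhat f) a b) (nhat f a) := happ
  rw [real_inner_comm (nhat f a)] at this
  rw [real_inner_comm]
  linarith [this]

end Aux

/-- For two nearby points `z₁, z₂` on the level surface `{f = 0}`, with midpoint
`a = (z₁ + z₂)/2` and relative vector `b = (z₁ − z₂)/2`, the tangential part of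
`b × Dn̂(a)[b]` is of quartic order: `‖(b × Dn̂(a)[b]) × n̂(a)‖ ≤ C ‖b‖⁴`. -/
theorem tangential_part_quartic_bound
    (f : EuclideanSpace ℝ (Fin 3) → ℝ) (hf : ContDiff ℝ 3 f)
    (x₀ : EuclideanSpace ℝ (Fin 3)) (hx₀0 : f x₀ = 0) (hx₀ : gradient f x₀ ≠ 0) :
    ∃ δ > (0:ℝ), ∃ C > (0:ℝ),
      ∀ z₁ z₂ : EuclideanSpace ℝ (Fin 3),
        z₁ ∈ Metric.ball x₀ δ → z₂ ∈ Metric.ball x₀ δ → f z₁ = 0 → f z₂ = 0 →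
          gradient f ((2:ℝ)⁻¹ • (z₁ + z₂)) ≠ 0 ∧
          ‖cross3
              (cross3 ((2:ℝ)⁻¹ • (z₁ - z₂))
                (fderiv ℝ (nhat f) ((2:ℝ)⁻¹ • (z₁ + z₂)) ((2:ℝ)⁻¹ • (z₁ - z₂))))
              (nhat f ((2:ℝ)⁻¹ • (z₁ + z₂)))‖
            ≤ C * ‖(2:ℝ)⁻¹ • (z₁ - z₂)‖ ^ 4 := by
  classical
  have hg : ContDiff ℝ 2 (gradient f) := gradient_contDiff hf
  set m := ‖gradient f x₀‖ with hmdef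
  have hm : 0 < m := norm_pos_iff.2 hx₀
  -- find r so that the gradient is large on the closed ball
  obtain ⟨r₀, hr₀, hr₀'⟩ := Metric.continuousAt_iff.1 hg.continuous.continuousAt (m/2)
    (by positivity)
  set r := r₀ / 2 with hrdef
  have hr : 0 < r := by positivity
  have hball : ∀ y ∈ Metric.closedBall x₀ r, m / 2 ≤ ‖gradient f y‖ := by
    intro y hy
    have h1 : dist y x₀ < r₀ := lt_of_le_of_lt (Metric.mem_closedBall.1 hy) (by
      rw [hrdef]; linarith)
    have h2 := hr₀' h1
    rw [dist_eq_norm] at h2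
    calc m / 2 = m - m / 2 := by ring
      _ ≤ ‖gradient f y‖ := by
          have := (abs_le.1 ((abs_norm_sub_norm_le (gradient f y) (gradient f x₀)).trans h2.le)).1
          rw [← hmdef] at this
          linarith
  have hne : ∀ y ∈ Metric.closedBall x₀ r, gradient f y ≠ 0 := by
    intro y hy
    have := hball y hy
    intro h0
    rw [h0, norm_zero] at this
    linarith
  -- bound the third derivative on the closed ball
  have hF3cont : Continuous (fderiv ℝ (fderiv ℝ (fderiv ℝ f))) := by
    have hF2 : ContDiff ℝ 1 (fderiv ℝ (fderiv ℝ f)) :=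
      (hf.fderiv_right (m := 2) (by norm_num)).fderiv_right (by norm_num)
    exact hF2.continuous_fderiv one_ne_zero
  obtain ⟨M, hM⟩ := (isCompact_closedBall x₀ r).exists_bound_of_continuousOn
    (f := fderiv ℝ (fderiv ℝ (fderiv ℝ f))) hF3cont.continuousOn
  have hM0 : 0 ≤ M := le_trans (norm_nonneg _) (hM x₀ (Metric.mem_closedBall_self hr.le))
  -- bound fderiv of nhat on the closed ball
  have hV : IsOpen {x : EuclideanSpace ℝ (Fin 3) | gradient f x ≠ 0} := by
    have : {x : EuclideanSpace ℝ (Fin 3) | gradient f x ≠ 0} = (gradient f) ⁻¹' {0}ᶜ := rfl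
    rw [this]
    exact (isClosed_singleton.preimage hg.continuous).isOpen_compl
  have hsubV : Metric.closedBall x₀ r ⊆ {x : EuclideanSpace ℝ (Fin 3) | gradient f x ≠ 0} :=
    fun y hy => hne y hy
  have hnhatC1 : ContDiffOn ℝ 1 (nhat f) {x : EuclideanSpace ℝ (Fin 3) | gradient f x ≠ 0} :=
    fun x hx => (nhat_contDiffAt hf hx).contDiffWithinAt
  have hfdcont : ContinuousOn (fderiv ℝ (nhat f)) {x : EuclideanSpace ℝ (Fin 3) | gradient f x ≠ 0} :=
    hnhatC1.continuousOn_fderiv_of_isOpen hV le_rfl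
  obtain ⟨K, hK⟩ := (isCompact_closedBall x₀ r).exists_bound_of_continuousOn
    (hfdcont.mono hsubV)
  have hK0 : 0 ≤ K := le_trans (norm_nonneg _) (hK x₀ (Metric.mem_closedBall_self hr.le))
  refine ⟨r, hr, M / 6 * (2 / m) * K + 1, by positivity, ?_⟩
  intro z₁ z₂ hz₁ hz₂ hfz₁ hfz₂
  set a := (2:ℝ)⁻¹ • (z₁ + z₂) with hadef
  set b := (2:ℝ)⁻¹ • (z₁ - z₂) with hbdef
  have hconv : Convex ℝ (Metric.ball x₀ r) := convex_ball x₀ r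
  have ha_mem : a ∈ Metric.ball x₀ r := by
    have := hconv hz₁ hz₂ (by norm_num : (0:ℝ) ≤ 2⁻¹) (by norm_num : (0:ℝ) ≤ 2⁻¹) (by norm_num)
    rwa [hadef, smul_add]
  have hga : gradient f a ≠ 0 := hne a (Metric.ball_subset_closedBall ha_mem)
  refine ⟨hga, ?_⟩
  have hb1 : z₁ - a = b := by rw [hadef, hbdef]; module
  have hb2 : z₂ - a = -b := by rw [hadef, hbdef]; module
  -- membership of segment points
  have hseg : ∀ t ∈ Icc (0:ℝ) 1, a + t • b ∈ Metric.closedBall x₀ r ∧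
      a + t • (-b) ∈ Metric.closedBall x₀ r := by
    intro t ht
    constructor
    · rw [← hb1]
      exact Metric.ball_subset_closedBall (hconv.add_smul_sub_mem ha_mem hz₁ ht)
    · rw [← hb2]
      exact Metric.ball_subset_closedBall (hconv.add_smul_sub_mem ha_mem hz₂ ht)
  -- Taylor estimate
  have htay : |fderiv ℝ f a b| ≤ M / 6 * ‖b‖ ^ 3 := by
    refine taylor_core hf a b (fun t ht => ⟨hM _ (hseg t ht).1, hM _ (hseg t ht).2⟩) ?_ ?_
    · have : a + b = z₁ := by rw [← hb1]; abel
      rw [this, hfz₁]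
    · have : a - b = z₂ := by rw [hadef, hbdef]; module
      rw [this, hfz₂]
  -- rewrite the cross product
  rw [cross3_cross3, nhat_orth hf hga b, zero_smul, sub_zero, norm_smul, Real.norm_eq_abs]
  -- bound the inner product
  have hinner : |(inner ℝ b (nhat f a) : ℝ)| ≤ 2 / m * (M / 6 * ‖b‖ ^ 3) := by
    have e : (inner ℝ b (nhat f a) : ℝ) = ‖gradient f a‖⁻¹ * fderiv ℝ f a b := by
      rw [nhat, real_inner_smul_right, real_inner_comm, inner_gradient_eq]
    rw [e, abs_mul, abs_inv, abs_norm]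
    have hga' : m / 2 ≤ ‖gradient f a‖ := hball a (Metric.ball_subset_closedBall ha_mem)
    have h1 : ‖gradient f a‖⁻¹ ≤ 2 / m := by
      have h2 : (0:ℝ) < m / 2 := by positivity
      rw [show (2:ℝ)/m = (m/2)⁻¹ by field_simp]
      exact inv_anti₀ h2 hga'
    exact mul_le_mul h1 htay (abs_nonneg _) (by positivity)
  have hw : ‖fderiv ℝ (nhat f) a b‖ ≤ K * ‖b‖ := by
    calc ‖fderiv ℝ (nhat f) a b‖ ≤ ‖fderiv ℝ (nhat f) a‖ * ‖b‖ := (fderiv ℝ (nhat f) a).le_opNorm b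
      _ ≤ K * ‖b‖ := by
          gcongr
          exact hK a (Metric.ball_subset_closedBall ha_mem)
  calc |(inner ℝ b (nhat f a) : ℝ)| * ‖fderiv ℝ (nhat f) a b‖
      ≤ (2 / m * (M / 6 * ‖b‖ ^ 3)) * (K * ‖b‖) :=
        mul_le_mul hinner hw (norm_nonneg _) (by positivity)
    _ = M / 6 * (2 / m) * K * ‖b‖ ^ 4 := by ring
    _ ≤ (M / 6 * (2 / m) * K + 1) * ‖b‖ ^ 4 := by
        have : (0:ℝ) ≤ ‖b‖ ^ 4 := by positivity
        nlinarith
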